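/- Let G be a group with finite generating set X such that for every finite nonempty A ⊆ G there exists x ∈ X with #(xA Δ A) ≥ c·#A for a fixed c > 0. Then γ_G^X(n) ≥ (1 + c/2)^n for all n ≥ 0; in particular G has exponential growth with ω(G,X) ≥ 1 + c/2. -/

import Mathlib

/-- Word length of g with respect to X ∪ X⁻¹: the least length of a word in the
generators and their inverses representing g. -/
noncomputable def wlen {G : Type*} [Group G] (X : Set G) (g : G) : ℕ :=
  sInf {n | ∃ l : List G, l.length = n ∧ (∀ x ∈ l, x ∈ X ∨ x⁻¹ ∈ X) ∧ l.prod = g}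

/-- The growth function γ_G^X(n) = #{g ∈ G : |g|_X ≤ n}. -/
noncomputable def growth {G : Type*} [Group G] (X : Finset G) (n : ℕ) : ℕ :=
  Nat.card {g : G // wlen (X : Set G) g ≤ n}

/-- The exponential growth rate ω(G,X) = inf_n γ_G^X(n)^{1/n}
(which equals the limit of γ_G^X(n)^{1/n} by submultiplicativity). -/
noncomputable def growthRate {G : Type*} [Group G] (X : Finset G) : ℝ :=
  ⨅ n : ℕ, (growth X (n + 1) : ℝ) ^ ((1 : ℝ) / (n + 1))

open scoped symmDiff

section aux
variable {G : Type*} [Group G]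

lemma wlen_exists (X : Finset G) (hX : Subgroup.closure (X : Set G) = ⊤) (g : G) :
    ∃ l : List G, (∀ x ∈ l, x ∈ (X : Set G) ∨ x⁻¹ ∈ (X : Set G)) ∧ l.prod = g := by
  have hg : g ∈ Subgroup.closure (X : Set G) := by rw [hX]; trivial
  induction hg using Subgroup.closure_induction with
  | mem x hx =>
      refine ⟨[x], ?_, by simp⟩
      intro y hy
      simp only [List.mem_singleton] at hy
      subst hy
      exact Or.inl hx
  | one => exact ⟨[], by simp, by simp⟩
  | mul a b _ _ iha ihb =>
      obtain ⟨la, hla, hpa⟩ := iha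
      obtain ⟨lb, hlb, hpb⟩ := ihb
      refine ⟨la ++ lb, ?_, by simp [hpa, hpb]⟩
      intro x hx
      rcases List.mem_append.1 hx with h | h
      exacts [hla x h, hlb x h]
  | inv a _ iha =>
      obtain ⟨l, hl, hp⟩ := iha
      refine ⟨(l.map (·⁻¹)).reverse, ?_, ?_⟩
      · intro x hx
        simp only [List.mem_reverse, List.mem_map] at hx
        obtain ⟨y, hy, rfl⟩ := hx
        rcases hl y hy with h | h
        · right; simpa using h
        · left; exact h
      · rw [← List.prod_inv_reverse, hp]

lemma wlen_le_of_word (X : Set G) {g : G} {l : List G}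
    (hl : ∀ x ∈ l, x ∈ X ∨ x⁻¹ ∈ X) (hp : l.prod = g) : wlen X g ≤ l.length :=
  Nat.sInf_le ⟨l, rfl, hl, hp⟩

lemma wlen_spec (X : Finset G) (hX : Subgroup.closure (X : Set G) = ⊤) (g : G) :
    ∃ l : List G, l.length = wlen (X : Set G) g ∧
      (∀ x ∈ l, x ∈ (X : Set G) ∨ x⁻¹ ∈ (X : Set G)) ∧ l.prod = g := by
  obtain ⟨l, hl, hp⟩ := wlen_exists X hX g
  have hne : {n | ∃ l : List G, l.length = n ∧
      (∀ x ∈ l, x ∈ (X : Set G) ∨ x⁻¹ ∈ (X : Set G)) ∧ l.prod = g}.Nonempty :=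
    ⟨l.length, l, rfl, hl, hp⟩
  exact Nat.sInf_mem hne

lemma wlen_one_le (X : Set G) : wlen X (1 : G) ≤ 0 :=
  wlen_le_of_word X (l := []) (by simp) (by simp)

lemma wlen_mul_le (X : Finset G) (hX : Subgroup.closure (X : Set G) = ⊤)
    {x : G} (hx : x ∈ X) (g : G) :
    wlen (X : Set G) (x * g) ≤ wlen (X : Set G) g + 1 := by
  obtain ⟨l, hlen, hl, hp⟩ := wlen_spec X hX g
  have hword : ∀ y ∈ x :: l, y ∈ (X : Set G) ∨ y⁻¹ ∈ (X : Set G) := by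
    intro y hy
    rcases List.mem_cons.1 hy with rfl | h
    · exact Or.inl hx
    · exact hl y h
  have := wlen_le_of_word (X : Set G) (g := x * g) hword (by simp [hp])
  simpa [hlen] using this

lemma ball_finite (X : Finset G) (hX : Subgroup.closure (X : Set G) = ⊤) (n : ℕ) :
    {g : G | wlen (X : Set G) g ≤ n}.Finite := by
  induction n with
  | zero =>
    apply Set.Finite.subset (Set.finite_singleton (1 : G))
    intro g hg
    simp only [Set.mem_setOf_eq, Nat.le_zero] at hg
    obtain ⟨l, hlen, hl, hp⟩ := wlen_spec X hX g
    rw [hg] at hlen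
    have : l = [] := List.length_eq_zero_iff.mp hlen
    subst this
    simp only [List.prod_nil] at hp
    simp [← hp]
  | succ n ih =>
    have hS : ((X : Set G) ∪ (X : Set G)⁻¹).Finite :=
      X.finite_toSet.union X.finite_toSet.inv
    apply Set.Finite.subset (ih.union (hS.biUnion (fun x _ => ih.image (fun g => x * g))))
    intro g hg
    simp only [Set.mem_setOf_eq] at hg
    obtain ⟨l, hlen, hl, hp⟩ := wlen_spec X hX g
    rcases l with _ | ⟨a, t⟩
    · left
      simp only [List.prod_nil] at hp
      have : wlen (X : Set G) g ≤ 0 := hp ▸ wlen_one_le (X : Set G)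
      exact le_trans this (Nat.zero_le n)
    · right
      have ha : a ∈ (X : Set G) ∪ (X : Set G)⁻¹ := by
        rcases hl a List.mem_cons_self with h | h
        · exact Or.inl h
        · exact Or.inr (by simpa using h)
      have ht : wlen (X : Set G) t.prod ≤ n := by
        have h1 : wlen (X : Set G) t.prod ≤ t.length :=
          wlen_le_of_word _ (fun x hx => hl x (List.mem_cons_of_mem a hx)) rfl
        have h2 : t.length + 1 = wlen (X : Set G) g := by simpa using hlen
        omega
      refine Set.mem_biUnion ha ⟨t.prod, ht, ?_⟩
      simpa using hp

end aux


/-- If every finite nonempty A ⊆ G has #(xA Δ A) ≥ c·#A for some x ∈ X, then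
γ_G^X(n) ≥ (1 + c/2)^n; in particular ω(G,X) ≥ 1 + c/2. -/
theorem growth_of_isoperimetric {G : Type*} [Group G] [DecidableEq G]
    (X : Finset G) (hX : Subgroup.closure (X : Set G) = ⊤)
    (c : ℝ) (hc : 0 < c)
    (hiso : ∀ A : Finset G, A.Nonempty → ∃ x ∈ X,
      c * A.card ≤ ((A.image (fun a => x * a)) ∆ A).card) :
    (∀ n : ℕ, (1 + c / 2) ^ n ≤ (growth X n : ℝ)) ∧
    1 + c / 2 ≤ growthRate X := by
  have hfin : ∀ n, {g : G | wlen (X : Set G) g ≤ n}.Finite := ball_finite X hX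
  set A : ℕ → Finset G := fun n => (hfin n).toFinset with hA
  have hmem : ∀ n (g : G), g ∈ A n ↔ wlen (X : Set G) g ≤ n := by
    intro n g; simp [hA, Set.Finite.mem_toFinset]
  have hgrowth : ∀ n, growth X n = (A n).card := by
    intro n
    have : growth X n = Nat.card {g : G | wlen (X : Set G) g ≤ n} := rfl
    rw [this, Nat.card_coe_set_eq, Set.ncard_eq_toFinset_card _ (hfin n)]
  have h1 : ∀ n, (1 : G) ∈ A n := by
    intro n
    rw [hmem]
    exact le_trans (wlen_one_le _) (Nat.zero_le n)
  have hpos : (0 : ℝ) < 1 + c / 2 := by linarith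
  have hstep : ∀ n, (1 + c / 2) * ((A n).card : ℝ) ≤ ((A (n + 1)).card : ℝ) := by
    intro n
    obtain ⟨x, hx, hiso'⟩ := hiso (A n) ⟨1, h1 n⟩
    set T := (A n).image (fun a => x * a) with hT
    have hTcard : T.card = (A n).card :=
      Finset.card_image_of_injective _ (mul_right_injective x)
    have hsub : T ∪ A n ⊆ A (n + 1) := by
      intro g hg
      rcases Finset.mem_union.1 hg with h | h
      · obtain ⟨a, ha, rfl⟩ := Finset.mem_image.1 h
        rw [hmem] at ha ⊢
        have := wlen_mul_le X hX hx a
        omega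
      · rw [hmem] at h ⊢; omega
    have key : (T ∆ A n).card + (T ∩ A n).card = (T ∪ A n).card := by
      rw [symmDiff_eq_sup_sdiff_inf]
      exact Finset.card_sdiff_add_card_eq_card
        (le_trans inf_le_left le_sup_left)
    have key2 : (T ∪ A n).card + (T ∩ A n).card = 2 * (A n).card := by
      rw [Finset.card_union_add_card_inter, hTcard]; ring
    have hle : (T ∪ A n).card ≤ (A (n + 1)).card := Finset.card_le_card hsub
    have h1' : ((T ∆ A n).card : ℝ) + ((T ∩ A n).card : ℝ) = ((T ∪ A n).card : ℝ) := by
      exact_mod_cast congrArg (Nat.cast : ℕ → ℝ) key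
    have h2' : ((T ∪ A n).card : ℝ) + ((T ∩ A n).card : ℝ) = 2 * ((A n).card : ℝ) := by
      exact_mod_cast congrArg (Nat.cast : ℕ → ℝ) key2
    have h3' : ((T ∪ A n).card : ℝ) ≤ ((A (n + 1)).card : ℝ) := by exact_mod_cast hle
    linarith
  have hpow : ∀ n, (1 + c / 2) ^ n ≤ ((A n).card : ℝ) := by
    intro n
    induction n with
    | zero =>
      have : 1 ≤ (A 0).card := Finset.card_pos.mpr ⟨1, h1 0⟩
      simpa using (by exact_mod_cast this : (1 : ℝ) ≤ ((A 0).card : ℝ))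
    | succ n ih =>
      calc (1 + c / 2) ^ (n + 1) = (1 + c / 2) * (1 + c / 2) ^ n := by ring
        _ ≤ (1 + c / 2) * ((A n).card : ℝ) :=
            mul_le_mul_of_nonneg_left ih hpos.le
        _ ≤ ((A (n + 1)).card : ℝ) := hstep n
  refine ⟨fun n => by rw [hgrowth]; exact hpow n, ?_⟩
  apply le_ciInf
  intro n
  have hg : (1 + c / 2) ^ (n + 1) ≤ (growth X (n + 1) : ℝ) := by
    rw [hgrowth]; exact hpow (n + 1)
  have hne : ((n : ℝ) + 1) ≠ 0 := by positivity
  have heq : 1 + c / 2 = ((1 + c / 2) ^ (n + 1)) ^ ((1 : ℝ) / ((n : ℝ) + 1)) := by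
    rw [← Real.rpow_natCast (1 + c / 2) (n + 1), ← Real.rpow_mul hpos.le]
    push_cast
    rw [mul_one_div, div_self hne, Real.rpow_one]
  rw [heq]
  exact Real.rpow_le_rpow (by positivity) hg (by positivity)
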